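/- Let K₁, K₂ > 0 and C₁₁₁, C₁₁₂, C₁₂₂, C₂₂₂ ∈ ℝ. For u ∈ ℝ⁴ let a(u) be the 4×4 matrix with rows (0,0,0,1), (0,0,−1,0), (−c(u),−d₂(u),0,0), (d₁(u),c(u),0,0), where d₁(u) = K₁ + 6C₁₁₁·u¹ + 2C₁₁₂·u², d₂(u) = K₂ + 2C₁₂₂·u¹ + 6C₂₂₂·u², c(u) = 2C₁₁₂·u¹ + 2C₁₂₂·u². Set e₁ = (1,0,0,√K₁), ℓ₁ = (1/(2√K₁))·(√K₁,0,0,1), e₂ = (0,1,−√K₂,0), ℓ₂ = (1/(2√K₂))·(0,√K₂,−1,0). Then: e₁ and e₂ are eigenvectors of a(0) with eigenvalues √K₁ and √K₂ respectively, ℓ₁·e₁ = 1, ℓ₂·e₂ = 1, ℓ₁·e₂ = 0, ℓ₂·e₁ = 0, and the genuine non-linearity coefficients satisfy ℓ₁·( (a(e₁) − a(0))·e₁ ) = 3C₁₁₁/√K₁ and ℓ₂·( (a(e₂) − a(0))·e₂ ) = 3C₂₂₂/√K₂. In particular these coefficients are nonzero if and only if C₁₁₁ ≠ 0 and C₂₂₂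 ≠ 0 respectively. -/

import Mathlib

open Matrix

/-- Genuine non-linearity computation for the plane-wave crystal system
(last part of Lemma 4.1): at the trivial state, `e₁, e₂` are eigenvectors of
`a(0)` with eigenvalues `√K₁, √K₂`, dual to the covectors `ℓ₁, ℓ₂`, and the
genuine non-linearity coefficients are `3C₁₁₁/√K₁` and `3C₂₂₂/√K₂`. -/
theorem genuine_nonlinearity_coefficients
    (K₁ K₂ C111 C112 C122 C222 : ℝ) (hK₁ : 0 < K₁) (hK₂ : 0 < K₂) :
    let A : (Fin 4 → ℝ) → Matrix (Fin 4) (Fin 4) ℝ := fun w =>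
      !![0, 0, 0, 1;
         0, 0, -1, 0;
         -(2 * C112 * w 0 + 2 * C122 * w 1), -(K₂ + 2 * C122 * w 0 + 6 * C222 * w 1), 0, 0;
         K₁ + 6 * C111 * w 0 + 2 * C112 * w 1, 2 * C112 * w 0 + 2 * C122 * w 1, 0, 0]
    let e₁ : Fin 4 → ℝ := ![1, 0, 0, Real.sqrt K₁]
    let l₁ : Fin 4 → ℝ := (1 / (2 * Real.sqrt K₁)) • ![Real.sqrt K₁, 0, 0, 1]
    let e₂ : Fin 4 → ℝ := ![0, 1, -Real.sqrt K₂, 0]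
    let l₂ : Fin 4 → ℝ := (1 / (2 * Real.sqrt K₂)) • ![0, Real.sqrt K₂, -1, 0]
    (A 0).mulVec e₁ = Real.sqrt K₁ • e₁ ∧
    (A 0).mulVec e₂ = Real.sqrt K₂ • e₂ ∧
    dotProduct l₁ e₁ = 1 ∧
    dotProduct l₂ e₂ = 1 ∧
    dotProduct l₁ e₂ = 0 ∧
    dotProduct l₂ e₁ = 0 ∧
    dotProduct l₁ ((A e₁ - A 0).mulVec e₁) = 3 * C111 / Real.sqrt K₁ ∧
    dotProduct l₂ ((A e₂ - A 0).mulVec e₂) = 3 * C222 / Real.sqrt K₂ ∧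
    (3 * C111 / Real.sqrt K₁ ≠ 0 ↔ C111 ≠ 0) ∧
    (3 * C222 / Real.sqrt K₂ ≠ 0 ↔ C222 ≠ 0) := by
  intro A e₁ l₁ e₂ l₂
  have hs₁ : 0 < Real.sqrt K₁ := Real.sqrt_pos.2 hK₁
  have hs₂ : 0 < Real.sqrt K₂ := Real.sqrt_pos.2 hK₂
  have hq₁ : Real.sqrt K₁ * Real.sqrt K₁ = K₁ := Real.mul_self_sqrt hK₁.le
  have hq₂ : Real.sqrt K₂ * Real.sqrt K₂ = K₂ := Real.mul_self_sqrt hK₂.le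
  refine ⟨?_, ?_, ?_, ?_, ?_, ?_, ?_, ?_, ?_, ?_⟩
  · funext i; fin_cases i <;>
      simp [A, e₁, mulVec, dotProduct, Fin.sum_univ_four, hq₁]
  · funext i; fin_cases i <;>
      simp [A, e₂, mulVec, dotProduct, Fin.sum_univ_four, hq₂]
  · simp [l₁, e₁, dotProduct, Fin.sum_univ_four]; field_simp; ring
  · simp [l₂, e₂, dotProduct, Fin.sum_univ_four]; field_simp; ring
  · simp [l₁, e₂, dotProduct, Fin.sum_univ_four]
  · simp [l₂, e₁, dotProduct, Fin.sum_univ_four]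
  · simp [A, l₁, e₁, dotProduct, mulVec, Fin.sum_univ_four]
    field_simp
    ring_nf
  · simp [A, l₂, e₂, dotProduct, mulVec, Fin.sum_univ_four]
    field_simp
    ring_nf
  · constructor <;> intro h <;> intro hc <;> apply h <;> simp_all [hs₁.ne', div_eq_zero_iff]
  · constructor <;> intro h <;> intro hc <;> apply h <;> simp_all [hs₂.ne', div_eq_zero_iff]
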